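/- arXiv:1912.01600 — 3 statements merged into one kernel-verified Lean document; each statement's English description precedes it below -/
import Mathlib

section
/- In any simple graph G with at least one vertex, there exists a vertex v such that the number of triangles of G having at least one vertex in the closed neighborhood N[v] is at most C(d(v)+1, 3), where d(v) is the degree of v. -/
open Finset

namespace TriangleKeyLemma

variable {V : Type*} [Fintype V] [DecidableEq V] (G : SimpleGraph V) [DecidableRel G.Adj]

/-- The set of representatives of the pair `(v, T)`: vertices `x ∈ T` witnessing that the
triangle `T` meets `N[v]`.  If `v ∈ T` we take just `v`; otherwise all neighbors of `v` in `T`. -/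
def R (v : V) (T : Finset V) : Finset V :=
  if v ∈ T then {v} else T ∩ G.neighborFinset v

lemma R_subset (v : V) (T : Finset V) : R G v T ⊆ T := by
  unfold R
  split_ifs with h
  · simpa using h
  · exact inter_subset_left

lemma mem_R_of_adj {v u : V} {T : Finset V} (hv : v ∉ T) (hu : u ∈ T) (hadj : G.Adj v u) :
    u ∈ R G v T := by
  unfold R
  rw [if_neg hv]
  exact mem_inter.mpr ⟨hu, (SimpleGraph.mem_neighborFinset _ _ _).mpr hadj⟩

lemma adj_of_mem_R {v u : V} {T : Finset V} (hv : v ∉ T) (hu : u ∈ R G v T) :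
    u ∈ T ∧ G.Adj v u := by
  unfold R at hu
  rw [if_neg hv] at hu
  exact ⟨(mem_inter.mp hu).1, (SimpleGraph.mem_neighborFinset _ _ _).mp (mem_inter.mp hu).2⟩

/-- nonemptiness of the representative set -/
lemma R_nonempty {v : V} {T : Finset V} (hM : ∃ u ∈ T, u = v ∨ G.Adj u v) :
    (R G v T).Nonempty := by
  by_cases hv : v ∈ T
  · exact ⟨v, by simp [R, hv]⟩
  · obtain ⟨u, hu, hu'⟩ := hM
    rcases hu' with rfl | hadj
    · exact absurd hu hv
    · exact ⟨u, mem_R_of_adj G hv hu hadj.symm⟩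

lemma R_card_dvd {v : V} {T : Finset V} (hT3 : T.card = 3)
    (hM : ∃ u ∈ T, u = v ∨ G.Adj u v) : (R G v T).card ∣ 6 := by
  have h1 : 1 ≤ (R G v T).card := card_pos.mpr (R_nonempty G hM)
  have h3 : (R G v T).card ≤ 3 := hT3 ▸ card_le_card (R_subset G v T)
  interval_cases h : (R G v T).card <;> decide

/-- the key map: the 3-subset of `N[x]` associated to `(v, T)` and representative `x`. -/
def keyS (v : V) (T : Finset V) (x : V) : Finset V := insert v (T.erase x)

/-- validity: the key set is a 3-element subset of the closed neighborhood of `x`. -/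
lemma keyS_mem_pow {v x : V} {T : Finset V} (hT : G.IsNClique 3 T) (hx : x ∈ R G v T) :
    keyS v T x ∈ (insert x (G.neighborFinset x)).powersetCard 3 := by
  rw [mem_powersetCard]
  by_cases hv : v ∈ T
  · -- then R = {v}, so x = v and keyS = T
    have hxv : x = v := by simpa [R, hv] using hx
    subst hxv
    have hTeq : keyS x T x = T := by
      simpa [keyS] using insert_erase hv
    rw [hTeq]
    refine ⟨fun u hu => ?_, hT.card_eq⟩
    by_cases hux : u = x
    · exact hux ▸ mem_insert_self _ _
    · exact mem_insert_of_mem ((SimpleGraph.mem_neighborFinset _ _ _).mpr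
        (hT.isClique hv hu (Ne.symm hux)))
  · obtain ⟨hxT, hadj⟩ := adj_of_mem_R G hv hx
    constructor
    · intro u hu
      rcases mem_insert.mp hu with rfl | hu'
      · exact mem_insert_of_mem ((SimpleGraph.mem_neighborFinset _ _ _).mpr hadj.symm)
      · have hune : u ≠ x := (mem_erase.mp hu').1
        have huT : u ∈ T := (mem_erase.mp hu').2
        by_cases hux : u = x
        · exact absurd hux hune
        · exact mem_insert_of_mem ((SimpleGraph.mem_neighborFinset _ _ _).mpr
            (hT.isClique hxT huT (Ne.symm hune)))
    · have hvne : v ∉ T.erase x := fun h => hv (mem_of_mem_erase h)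
      rw [keyS, card_insert_of_notMem hvne, card_erase_of_mem hxT, hT.card_eq]

/-- The fiber of the grouping map over `(x, S)`. -/
def Fib (x : V) (S : Finset V) : Finset (V × Finset V) :=
  ((univ ×ˢ G.cliqueFinset 3)).filter
    (fun p => (∃ u ∈ p.2, u = p.1 ∨ G.Adj u p.1) ∧ x ∈ R G p.1 p.2 ∧ keyS p.1 p.2 x = S)

lemma mem_Fib {x : V} {S : Finset V} {p : V × Finset V} :
    p ∈ Fib G x S ↔ G.IsNClique 3 p.2 ∧ (∃ u ∈ p.2, u = p.1 ∨ G.Adj u p.1) ∧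
      x ∈ R G p.1 p.2 ∧ keyS p.1 p.2 x = S := by
  simp [Fib, SimpleGraph.mem_cliqueFinset_iff, and_assoc]

/-- In the case `x ∈ S`, the fiber is contained in `{(x, S)}`. -/
lemma fib_subset_of_mem {x : V} {S : Finset V} (hxS : x ∈ S) :
    Fib G x S ⊆ {(x, S)} := by
  intro p hp
  obtain ⟨hT, hM, hxR, hkey⟩ := (mem_Fib G).mp hp
  have hv : p.1 ∈ p.2 := by
    by_contra hv
    obtain ⟨hxT, hadj⟩ := adj_of_mem_R G hv hxR
    -- x ∈ S = insert p.1 (p.2.erase x) forces x = p.1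
    rw [← hkey] at hxS
    rcases mem_insert.mp hxS with h | h
    · exact G.irrefl (by rwa [h] at hadj)
    · exact (mem_erase.mp h).1 rfl
  have hxv : x = p.1 := by simpa [R, hv] using hxR
  have hS : S = p.2 := by
    rw [← hkey, hxv, keyS, insert_erase hv]
  rw [mem_singleton]
  exact Prod.ext hxv.symm hS.symm

/-- In the case `x ∉ S`: every fiber element has `p.1 ∉ p.2`. -/
lemma fib_not_mem {x : V} {S : Finset V} (hxS : x ∉ S) {p : V × Finset V}
    (hp : p ∈ Fib G x S) : p.1 ∉ p.2 := by
  obtain ⟨hT, hM, hxR, hkey⟩ := (mem_Fib G).mp hp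
  intro hv
  have hxv : x = p.1 := by simpa [R, hv] using hxR
  apply hxS
  rw [← hkey, keyS, hxv, insert_erase hv, ← hxv] at *
  rw [hxv]
  exact hv

lemma fib_T_eq {x : V} {S : Finset V} (hxS : x ∉ S) {p : V × Finset V}
    (hp : p ∈ Fib G x S) : p.2 = insert x (S.erase p.1) := by
  obtain ⟨hT, hM, hxR, hkey⟩ := (mem_Fib G).mp hp
  have hv : p.1 ∉ p.2 := fib_not_mem G hxS hp
  have hxT : x ∈ p.2 := R_subset G _ _ hxR
  have hv' : p.1 ∉ p.2.erase x := fun h => hv (mem_of_mem_erase h)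
  have h1 : S.erase p.1 = p.2.erase x := by
    rw [← hkey, keyS, erase_insert hv']
  rw [h1, insert_erase hxT]

lemma fib_v_mem {x : V} {S : Finset V} {p : V × Finset V}
    (hp : p ∈ Fib G x S) : p.1 ∈ S := by
  obtain ⟨hT, hM, hxR, hkey⟩ := (mem_Fib G).mp hp
  rw [← hkey]
  exact mem_insert_self _ _

lemma fib_S_card {x : V} {S : Finset V} {p : V × Finset V}
    (hp : p ∈ Fib G x S) : S.card = 3 := by
  obtain ⟨hT, hM, hxR, hkey⟩ := (mem_Fib G).mp hp
  have := keyS_mem_pow G hT hxR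
  rw [hkey, mem_powersetCard] at this
  exact this.2

/-- the adjacency upgrade: if two distinct fiber elements exist, the "third" vertex of `S`
is in the representative set of the first. -/
lemma fib_third_mem {x : V} {S : Finset V} (hxS : x ∉ S) {p q : V × Finset V}
    (hp : p ∈ Fib G x S) (hq : q ∈ Fib G x S) (hne : p.1 ≠ q.1)
    {t : V} (htS : t ∈ S) (htp : t ≠ p.1) (htq : t ≠ q.1) :
    t ∈ R G p.1 p.2 := by
  obtain ⟨hTq, _, _, _⟩ := (mem_Fib G).mp hq
  have hq2 : q.2 = insert x (S.erase q.1) := fib_T_eq G hxS hq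
  have hvq : p.1 ∈ q.2 := by
    rw [hq2]
    exact mem_insert_of_mem (mem_erase.mpr ⟨hne, fib_v_mem G hp⟩)
  have htq2 : t ∈ q.2 := by
    rw [hq2]
    exact mem_insert_of_mem (mem_erase.mpr ⟨htq, htS⟩)
  have hadj : G.Adj p.1 t := hTq.isClique hvq htq2 (Ne.symm htp)
  have hp2 : p.2 = insert x (S.erase p.1) := fib_T_eq G hxS hp
  have htp2 : t ∈ p.2 := by
    rw [hp2]
    exact mem_insert_of_mem (mem_erase.mpr ⟨htp, htS⟩)
  exact mem_R_of_adj G (fib_not_mem G hxS hp) htp2 hadj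

/-- fiber elements are determined by their first coordinate. -/
lemma fib_inj {x : V} {S : Finset V} (hxS : x ∉ S) {p q : V × Finset V}
    (hp : p ∈ Fib G x S) (hq : q ∈ Fib G x S) (h1 : p.1 = q.1) : p = q := by
  have := fib_T_eq G hxS hp
  have := fib_T_eq G hxS hq
  exact Prod.ext h1 (by rw [fib_T_eq G hxS hp, fib_T_eq G hxS hq, h1])

/-- A total function extracting the "third" element of `S` besides `a, b`. -/
noncomputable def third (S : Finset V) (a b : V) : V :=
  if h : ((S.erase a).erase b).Nonempty then h.choose else a

lemma third_mem {S : Finset V} {a b : V} (h : ((S.erase a).erase b).Nonempty) :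
    third S a b ∈ (S.erase a).erase b := by
  rw [third, dif_pos h]
  exact h.choose_spec

/-- cardinality bound: every fiber element has a big representative set. -/
lemma fib_card_le {x : V} {S : Finset V} (hxS : x ∉ S) {p : V × Finset V}
    (hp : p ∈ Fib G x S) : (Fib G x S).card ≤ (R G p.1 p.2).card := by
  classical
  have hinj : Set.InjOn Prod.fst ((Fib G x S : Finset (V × Finset V)) : Set (V × Finset V)) := by
    intro a ha b hb hab
    exact fib_inj G hxS (by simpa using ha) (by simpa using hb) hab
  rw [← card_image_of_injOn hinj]
  have hS3 : S.card = 3 := fib_S_card G hp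
  have hpS : p.1 ∈ S := fib_v_mem G hp
  have hne : ∀ v2 : V, v2 ∈ S → v2 ≠ p.1 → ((S.erase p.1).erase v2).Nonempty := by
    intro v2 hv2S h
    apply card_pos.mp
    rw [card_erase_of_mem (mem_erase.mpr ⟨h, hv2S⟩), card_erase_of_mem hpS, hS3]
    norm_num
  have hmemI : ∀ v2 ∈ (Fib G x S).image Prod.fst, v2 ∈ S := by
    intro v2 hv2
    obtain ⟨q, hq, hq1⟩ := mem_image.mp hv2
    exact hq1 ▸ fib_v_mem G hq
  apply card_le_card_of_injOn (fun v2 => if v2 = p.1 then x else third S p.1 v2)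
  · intro v2 hv2
    by_cases h : v2 = p.1
    · simp only [if_pos h]
      exact ((mem_Fib G).mp hp).2.2.1
    · simp only [if_neg h]
      obtain ⟨q, hq, hq1⟩ := mem_image.mp hv2
      have hv2S : v2 ∈ S := hq1 ▸ fib_v_mem G hq
      have htmem := third_mem (hne v2 hv2S h)
      have htv2 : third S p.1 v2 ≠ v2 := (mem_erase.mp htmem).1
      have htp1 : third S p.1 v2 ≠ p.1 := (mem_erase.mp (mem_of_mem_erase htmem)).1
      have htS : third S p.1 v2 ∈ S := mem_of_mem_erase (mem_of_mem_erase htmem)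
      exact fib_third_mem G hxS hp hq (by rw [hq1]; exact fun hh => h hh.symm)
        htS htp1 (by rw [hq1]; exact htv2)
  · intro v2 hv2 v2' hv2' heq
    replace hv2 : v2 ∈ (Fib G x S).image Prod.fst := by simpa using hv2
    replace hv2' : v2' ∈ (Fib G x S).image Prod.fst := by simpa using hv2'
    dsimp only at heq
    by_cases h : v2 = p.1 <;> by_cases h' : v2' = p.1
    · rw [h, h']
    · exfalso
      rw [if_pos h, if_neg h'] at heq
      have htmem := third_mem (hne v2' (hmemI v2' hv2') h')
      exact hxS (heq ▸ mem_of_mem_erase (mem_of_mem_erase htmem))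
    · exfalso
      rw [if_neg h, if_pos h'] at heq
      have htmem := third_mem (hne v2 (hmemI v2 hv2) h)
      exact hxS (heq ▸ mem_of_mem_erase (mem_of_mem_erase htmem))
    · by_contra hnev
      rw [if_neg h, if_neg h'] at heq
      have htmem := third_mem (hne v2 (hmemI v2 hv2) h)
      have htmem' := third_mem (hne v2' (hmemI v2' hv2') h')
      rw [heq] at htmem
      set t := third S p.1 v2' with hts
      have htv2 : t ≠ v2 := (mem_erase.mp htmem).1
      have htv2' : t ≠ v2' := (mem_erase.mp htmem').1
      have htp1 : t ≠ p.1 := (mem_erase.mp (mem_of_mem_erase htmem)).1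
      have htS : t ∈ S := mem_of_mem_erase (mem_of_mem_erase htmem)
      have hsub : ({p.1, v2, v2', t} : Finset V) ⊆ S := by
        intro a ha
        simp only [mem_insert, mem_singleton] at ha
        rcases ha with rfl | rfl | rfl | rfl
        · exact hpS
        · exact hmemI _ hv2
        · exact hmemI _ hv2'
        · exact htS
      have hcard4 : ({p.1, v2, v2', t} : Finset V).card = 4 := by
        rw [card_insert_of_notMem, card_insert_of_notMem, card_insert_of_notMem,
          card_singleton]
        · simpa using htv2'.symm
        · simp only [mem_insert, mem_singleton]
          push_neg
          exact ⟨hnev, htv2.symm⟩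
        · simp only [mem_insert, mem_singleton]
          push_neg
          exact ⟨fun hh => h hh.symm, fun hh => h' hh.symm, htp1.symm⟩
      have := card_le_card hsub
      rw [hcard4, hS3] at this
      omega

/-- The load of each slot `(x, S)` is at most 6. -/
lemma fib_load_le (x : V) (S : Finset V) :
    ∑ p ∈ Fib G x S, 6 / (R G p.1 p.2).card ≤ 6 := by
  by_cases hxS : x ∈ S
  · calc ∑ p ∈ Fib G x S, 6 / (R G p.1 p.2).card
        ≤ ∑ p ∈ ({(x, S)} : Finset (V × Finset V)), 6 / (R G p.1 p.2).card :=
          sum_le_sum_of_subset (fib_subset_of_mem G hxS)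
      _ = 6 / (R G x S).card := by rw [sum_singleton]
      _ ≤ 6 := Nat.div_le_self _ _
  · rcases (Fib G x S).eq_empty_or_nonempty with hF | hF
    · rw [hF]; simp
    · have hpos : 0 < (Fib G x S).card := card_pos.mpr hF
      calc ∑ p ∈ Fib G x S, 6 / (R G p.1 p.2).card
          ≤ ∑ _p ∈ Fib G x S, 6 / (Fib G x S).card :=
            sum_le_sum fun p hp => Nat.div_le_div_left (fib_card_le G hxS hp) hpos
        _ = (Fib G x S).card * (6 / (Fib G x S).card) := by
            rw [sum_const, smul_eq_mul]
        _ ≤ 6 := by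
            rw [mul_comm]
            exact Nat.div_mul_le_self 6 _

/-- If the fiber is nonempty then `S` is a 3-subset of the closed neighborhood of `x`. -/
lemma fib_empty_of_not_pow {x : V} {S : Finset V}
    (hS : S ∉ (insert x (G.neighborFinset x)).powersetCard 3) : Fib G x S = ∅ := by
  rw [eq_empty_iff_forall_notMem]
  intro p hp
  obtain ⟨hT, hM, hxR, hkey⟩ := (mem_Fib G).mp hp
  exact hS (hkey ▸ keyS_mem_pow G hT hxR)

/-- **The key averaging inequality**: summed over all vertices, the number of triangles
meeting closed neighborhoods is at most the sum of `C(d(v)+1, 3)`. -/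
lemma key :
    ∑ v : V, ((G.cliqueFinset 3).filter (fun t => ∃ u ∈ t, u = v ∨ G.Adj u v)).card
      ≤ ∑ v : V, (G.degree v + 1).choose 3 := by
  classical
  have h6 : 6 * (∑ v : V,
      ((G.cliqueFinset 3).filter (fun t => ∃ u ∈ t, u = v ∨ G.Adj u v)).card)
      ≤ 6 * ∑ v : V, (G.degree v + 1).choose 3 := by
    set P : Finset (V × Finset V) :=
      (univ ×ˢ G.cliqueFinset 3).filter (fun p => ∃ u ∈ p.2, u = p.1 ∨ G.Adj u p.1) with hP
    have e1 : ∑ v : V,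
        ((G.cliqueFinset 3).filter (fun t => ∃ u ∈ t, u = v ∨ G.Adj u v)).card = P.card := by
      rw [hP, card_filter, sum_product]
      refine Finset.sum_congr rfl fun v _ => ?_
      rw [card_filter]
    rw [e1]
    -- step 2: 6 * P.card = sum over p in P of sum over x in R of weight
    have e2 : ∑ p ∈ P, (∑ _x ∈ R G p.1 p.2, 6 / (R G p.1 p.2).card) = 6 * P.card := by
      have hinner : ∀ p ∈ P, (∑ _x ∈ R G p.1 p.2, 6 / (R G p.1 p.2).card) = 6 := by
        intro p hp
        rw [sum_const, smul_eq_mul]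
        rw [hP, mem_filter, mem_product] at hp
        obtain ⟨⟨-, hT⟩, hM⟩ := hp
        have hT3 : p.2.card = 3 := (SimpleGraph.mem_cliqueFinset_iff.mp hT).card_eq
        exact Nat.mul_div_cancel' (R_card_dvd G hT3 hM)
      rw [Finset.sum_congr rfl hinner, sum_const, smul_eq_mul, mul_comm]
    rw [← e2]
    -- step 3: extend inner sum over univ with indicator
    have e3 : ∑ p ∈ P, ∑ _x ∈ R G p.1 p.2, 6 / (R G p.1 p.2).card
        = ∑ p ∈ P, ∑ x ∈ univ, if x ∈ R G p.1 p.2 then 6 / (R G p.1 p.2).card else 0 := by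
      refine Finset.sum_congr rfl fun p hp => ?_
      rw [Finset.sum_ite_mem, univ_inter]
    rw [e3, Finset.sum_comm]
    -- now ∑ x, ∑ p ∈ P, ite...
    have e5 : ∀ x : V, ∑ p ∈ P, (if x ∈ R G p.1 p.2 then 6 / (R G p.1 p.2).card else 0)
        ≤ 6 * (G.degree x + 1).choose 3 := by
      intro x
      have e5a : ∑ p ∈ P, (if x ∈ R G p.1 p.2 then 6 / (R G p.1 p.2).card else 0)
          = ∑ S : Finset V, ∑ p ∈ Fib G x S, 6 / (R G p.1 p.2).card := by
        have inner : ∀ p ∈ P, (if x ∈ R G p.1 p.2 then 6 / (R G p.1 p.2).card else 0)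
            = ∑ S : Finset V, (if x ∈ R G p.1 p.2 ∧ keyS p.1 p.2 x = S
                then 6 / (R G p.1 p.2).card else 0) := by
          intro p hp
          have hrw : ∀ S : Finset V, (if x ∈ R G p.1 p.2 ∧ keyS p.1 p.2 x = S
                then 6 / (R G p.1 p.2).card else 0)
              = (if keyS p.1 p.2 x = S then
                  (if x ∈ R G p.1 p.2 then 6 / (R G p.1 p.2).card else 0) else 0) := by
            intro S
            by_cases h1 : x ∈ R G p.1 p.2 <;> by_cases h2 : keyS p.1 p.2 x = S <;>
              simp [h1, h2]
          rw [Finset.sum_congr rfl (fun S _ => hrw S)]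
          rw [Finset.sum_ite_eq univ (keyS p.1 p.2 x)
            (fun _ => if x ∈ R G p.1 p.2 then 6 / (R G p.1 p.2).card else 0)]
          simp
        rw [Finset.sum_congr rfl inner, Finset.sum_comm]
        refine Finset.sum_congr rfl fun S _ => ?_
        have hfib : P.filter (fun p => x ∈ R G p.1 p.2 ∧ keyS p.1 p.2 x = S) = Fib G x S := by
          rw [hP, filter_filter, Fib]
        rw [← hfib]
        simp only [sum_filter]
      rw [e5a]
      have e5b : ∑ S : Finset V, ∑ p ∈ Fib G x S, 6 / (R G p.1 p.2).card
          = ∑ S ∈ (insert x (G.neighborFinset x)).powersetCard 3,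
              ∑ p ∈ Fib G x S, 6 / (R G p.1 p.2).card := by
        symm
        apply Finset.sum_subset (subset_univ _)
        intro S _ hS
        rw [fib_empty_of_not_pow G hS, sum_empty]
      rw [e5b]
      calc ∑ S ∈ (insert x (G.neighborFinset x)).powersetCard 3,
              ∑ p ∈ Fib G x S, 6 / (R G p.1 p.2).card
          ≤ ∑ _S ∈ (insert x (G.neighborFinset x)).powersetCard 3, 6 :=
            sum_le_sum fun S _ => fib_load_le G x S
        _ = ((insert x (G.neighborFinset x)).powersetCard 3).card * 6 := by
            rw [sum_const, smul_eq_mul]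
        _ = 6 * (G.degree x + 1).choose 3 := by
            rw [card_powersetCard, card_insert_of_notMem
              (SimpleGraph.notMem_neighborFinset_self G x), mul_comm,
              SimpleGraph.card_neighborFinset_eq_degree]
    calc ∑ x : V, ∑ p ∈ P, (if x ∈ R G p.1 p.2 then 6 / (R G p.1 p.2).card else 0)
        ≤ ∑ x : V, 6 * (G.degree x + 1).choose 3 := sum_le_sum fun x _ => e5 x
      _ = 6 * ∑ v : V, (G.degree v + 1).choose 3 := by rw [mul_sum]
  omega

end TriangleKeyLemma

/-- **Key Lemma (Lemma 1).** In any graph `G` with at least one vertex, there is a vertex `v`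
whose closed neighborhood `N[v]` meets at most `C(d(v)+1, 3)` triangles. -/
theorem exists_vertex_closed_neighborhood_meets_few_triangles
    (V : Type*) [Fintype V] [DecidableEq V] [Nonempty V]
    (G : SimpleGraph V) [DecidableRel G.Adj] :
    ∃ v : V,
      ((G.cliqueFinset 3).filter (fun t => ∃ u ∈ t, u = v ∨ G.Adj u v)).card
        ≤ (G.degree v + 1).choose 3 := by
  by_contra hcon
  push_neg at hcon
  have hkey := TriangleKeyLemma.key G
  have h2 : ∑ v : V, ((G.degree v + 1).choose 3 + 1)
      ≤ ∑ v : V, ((G.cliqueFinset 3).filter (fun t => ∃ u ∈ t, u = v ∨ G.Adj u v)).card :=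
    Finset.sum_le_sum fun v _ => hcon v
  rw [Finset.sum_add_distrib, Finset.sum_const, smul_eq_mul, mul_one] at h2
  rw [Finset.card_univ] at h2
  have hpos : 0 < Fintype.card V := Fintype.card_pos
  omega
end

section
/- For any finite simple graph G, Σ_v |T_{N[v]}| ≤ Σ_v (d(v)^3 − d(v))/6, where both sums are over all vertices v of G. -/
open Finset

namespace TriNbhdAux

variable {V : Type*} [Fintype V] [DecidableEq V]

/-- an arbitrary injective labeling of the vertices by naturals -/
noncomputable def k [Fintype V] : V → ℕ := fun v => ((Fintype.equivFin V) v : ℕ)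

lemma k_inj : Function.Injective (k (V := V)) := fun a b h =>
  (Fintype.equivFin V).injective (Fin.val_injective h)

variable (G : SimpleGraph V) [DecidableRel G.Adj]

/-- the chosen vertex of the triangle `p.2` used as the slot for the pair `p` -/
noncomputable def pick (p : (_ : V) × Finset V)
    (h : (p.2.filter (fun u => G.Adj u p.1)).Nonempty ∧
      (p.2 \ p.2.filter (fun u => G.Adj u p.1)).Nonempty) : V :=
  if k p.1 < k h.2.choose then
    (Finset.exists_min_image (p.2.filter (fun u => G.Adj u p.1)) k h.1).choose
  else
    (Finset.exists_max_image (p.2.filter (fun u => G.Adj u p.1)) k h.1).choose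

lemma pick_mem (p : (_ : V) × Finset V) (h) :
    pick G p h ∈ p.2.filter (fun u => G.Adj u p.1) := by
  unfold pick
  split
  · exact (Finset.exists_min_image (p.2.filter (fun u => G.Adj u p.1)) k h.1).choose_spec.1
  · exact (Finset.exists_max_image (p.2.filter (fun u => G.Adj u p.1)) k h.1).choose_spec.1

lemma pick_min (p : (_ : V) × Finset V) (h) (hlt : k p.1 < k h.2.choose) :
    ∀ u ∈ p.2.filter (fun u => G.Adj u p.1), k (pick G p h) ≤ k u := by
  unfold pick
  rw [if_pos hlt]
  exact (Finset.exists_min_image (p.2.filter (fun u => G.Adj u p.1)) k h.1).choose_spec.2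

lemma pick_max (p : (_ : V) × Finset V) (h) (hlt : ¬ k p.1 < k h.2.choose) :
    ∀ u ∈ p.2.filter (fun u => G.Adj u p.1), k u ≤ k (pick G p h) := by
  unfold pick
  rw [if_neg hlt]
  exact (Finset.exists_max_image (p.2.filter (fun u => G.Adj u p.1)) k h.1).choose_spec.2

/-- the injection -/
noncomputable def phi (p : (_ : V) × Finset V) : (_ : V) × Finset V :=
  if p.1 ∈ p.2 then p
  else if h : (p.2.filter (fun u => G.Adj u p.1)).Nonempty ∧
      (p.2 \ p.2.filter (fun u => G.Adj u p.1)).Nonempty then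
    ⟨pick G p h, insert p.1 (p.2.erase (pick G p h))⟩
  else p


lemma phi_of_mem (p : (_ : V) × Finset V) (h : p.1 ∈ p.2) : phi G p = p := by
  unfold phi; rw [if_pos h]

lemma phi_of_pick (p : (_ : V) × Finset V) (h1 : p.1 ∉ p.2)
    (h2 : (p.2.filter (fun u => G.Adj u p.1)).Nonempty ∧
      (p.2 \ p.2.filter (fun u => G.Adj u p.1)).Nonempty) :
    phi G p = ⟨pick G p h2, insert p.1 (p.2.erase (pick G p h2))⟩ := by
  unfold phi; rw [if_neg h1, dif_pos h2]

lemma phi_of_other (p : (_ : V) × Finset V) (h1 : p.1 ∉ p.2)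
    (h2 : ¬ ((p.2.filter (fun u => G.Adj u p.1)).Nonempty ∧
      (p.2 \ p.2.filter (fun u => G.Adj u p.1)).Nonempty)) :
    phi G p = p := by
  unfold phi; rw [if_neg h1, dif_neg h2]

lemma mixed_absurd {v' : V} {t t' : Finset V} (ht : G.IsNClique 3 t) (hv' : v' ∉ t')
    (h' : (t'.filter (fun u => G.Adj u v')).Nonempty ∧
      (t' \ t'.filter (fun u => G.Adj u v')).Nonempty)
    (hS : t = insert v' (t'.erase (pick G ⟨v', t'⟩ h'))) : False := by
  set c' := pick G ⟨v', t'⟩ h' with hcdef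
  have hc' := pick_mem G ⟨v', t'⟩ h'
  rw [Finset.mem_filter] at hc'
  obtain ⟨b', hb'⟩ := h'.2
  rw [Finset.mem_sdiff, Finset.mem_filter] at hb'
  have hb'2 : ¬ G.Adj b' v' := fun ha => hb'.2 ⟨hb'.1, ha⟩
  have hbc : b' ≠ c' := fun e => hb'2 (e ▸ hc'.2)
  have hv'm : v' ∈ t := hS ▸ Finset.mem_insert_self v' _
  have hb'm : b' ∈ t := by
    rw [hS]; exact Finset.mem_insert_of_mem (Finset.mem_erase.2 ⟨hbc, hb'.1⟩)
  have hne : v' ≠ b' := fun e => hv' (e ▸ hb'.1)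
  exact hb'2 ((ht.1 hv'm hb'm hne).symm)

lemma both_absurd {v v' : V} {t t' : Finset V}
    (ht : G.IsNClique 3 t) (ht' : G.IsNClique 3 t')
    (hv : v ∉ t) (hv' : v' ∉ t') (hvv : v ≠ v')
    (h : (t.filter (fun u => G.Adj u v)).Nonempty ∧
      (t \ t.filter (fun u => G.Adj u v)).Nonempty)
    (h' : (t'.filter (fun u => G.Adj u v')).Nonempty ∧
      (t' \ t'.filter (fun u => G.Adj u v')).Nonempty)
    (hx : pick G ⟨v, t⟩ h = pick G ⟨v', t'⟩ h')
    (hS : insert v (t.erase (pick G ⟨v, t⟩ h))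
      = insert v' (t'.erase (pick G ⟨v', t'⟩ h'))) : False := by
  obtain ⟨c, hcdef⟩ : ∃ c, pick G ⟨v, t⟩ h = c := ⟨_, rfl⟩
  rw [hcdef] at hx hS
  rw [← hx] at hS
  have hc : c ∈ t ∧ G.Adj c v := by
    have hm := pick_mem G ⟨v, t⟩ h
    rw [Finset.mem_filter] at hm
    rw [← hcdef]; exact hm
  have hc' : c ∈ t' ∧ G.Adj c v' := by
    have hm := pick_mem G ⟨v', t'⟩ h'
    rw [Finset.mem_filter] at hm
    rw [hx]; exact hm
  -- basic distinctness
  have hvc : v ≠ c := by intro e; rw [← e] at hc; exact G.loopless.irrefl v hc.2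
  have hv'c : v' ≠ c := by intro e; rw [← e] at hc'; exact G.loopless.irrefl v' hc'.2
  -- v' ∈ t, v ∈ t'
  have hv't : v' ∈ t.erase c := by
    have hm : v' ∈ insert v (t.erase c) := hS ▸ Finset.mem_insert_self v' _
    rcases Finset.mem_insert.1 hm with e | hm'
    · exact absurd e.symm hvv
    · exact hm'
  have hvt' : v ∈ t'.erase c := by
    have hm : v ∈ insert v' (t'.erase c) := hS ▸ Finset.mem_insert_self v _
    rcases Finset.mem_insert.1 hm with e | hm'
    · exact absurd e hvv
    · exact hm'
  -- the third vertex w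
  have hwne : ((t.erase c).erase v').Nonempty := by
    rw [← Finset.card_pos, Finset.card_erase_of_mem hv't,
      Finset.card_erase_of_mem hc.1, ht.2]
    norm_num
  obtain ⟨w, hw⟩ := hwne
  have hwv' : w ≠ v' := (Finset.mem_erase.1 hw).1
  have hwec : w ∈ t.erase c := (Finset.mem_erase.1 hw).2
  have hwc : w ≠ c := (Finset.mem_erase.1 hwec).1
  have hwt : w ∈ t := (Finset.mem_erase.1 hwec).2
  have hwv : w ≠ v := fun e => hv (e ▸ hwt)
  have hwt' : w ∈ t' := by
    have hm : w ∈ insert v' (t'.erase c) := hS ▸ Finset.mem_insert_of_mem hwec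
    rcases Finset.mem_insert.1 hm with e | hm'
    · exact absurd e hwv'
    · exact (Finset.mem_erase.1 hm').2
  have hv't2 : v' ∈ t := (Finset.mem_erase.1 hv't).2
  have hvt'2 : v ∈ t' := (Finset.mem_erase.1 hvt').2
  -- adjacencies
  have hAwv : G.Adj w v := ht'.1 hwt' hvt'2 hwv
  have hAwv' : G.Adj w v' := ht.1 hwt hv't2 hwv'
  -- t = {c, v', w} and t' = {c, v, w}
  have hts : ({c, v', w} : Finset V) = t := by
    apply Finset.eq_of_subset_of_card_le
    · intro x hx'
      rcases Finset.mem_insert.1 hx' with rfl | hx'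
      · exact hc.1
      rcases Finset.mem_insert.1 hx' with rfl | hx'
      · exact hv't2
      · rw [Finset.mem_singleton.1 hx']; exact hwt
    · rw [ht.2]
      rw [Finset.card_insert_of_notMem (by simp [hv'c.symm, hwc.symm]),
        Finset.card_insert_of_notMem (by simp [hwv'.symm]), Finset.card_singleton]
  have hts' : ({c, v, w} : Finset V) = t' := by
    apply Finset.eq_of_subset_of_card_le
    · intro x hx'
      rcases Finset.mem_insert.1 hx' with rfl | hx'
      · exact hc'.1
      rcases Finset.mem_insert.1 hx' with rfl | hx'
      · exact hvt'2
      · rw [Finset.mem_singleton.1 hx']; exact hwt'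
    · rw [ht'.2]
      rw [Finset.card_insert_of_notMem (by simp [hvc.symm, hwc.symm]),
        Finset.card_insert_of_notMem (by simp [hwv.symm]), Finset.card_singleton]
  -- the sdiff witnesses are v' and v respectively
  have hbspec := h.2.choose_spec
  rw [Finset.mem_sdiff, Finset.mem_filter] at hbspec
  have hbadj : ¬ G.Adj h.2.choose v := fun ha => hbspec.2 ⟨hbspec.1, ha⟩
  have hbv' : h.2.choose = v' := by
    have hbm : h.2.choose ∈ ({c, v', w} : Finset V) := hts ▸ hbspec.1
    rcases Finset.mem_insert.1 hbm with e | hbm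
    · rw [e] at hbadj; exact absurd hc.2 hbadj
    rcases Finset.mem_insert.1 hbm with e | hbm
    · exact e
    · rw [Finset.mem_singleton.1 hbm] at hbadj; exact absurd hAwv hbadj
  have hb'spec := h'.2.choose_spec
  rw [Finset.mem_sdiff, Finset.mem_filter] at hb'spec
  have hb'adj : ¬ G.Adj h'.2.choose v' := fun ha => hb'spec.2 ⟨hb'spec.1, ha⟩
  have hb'v : h'.2.choose = v := by
    have hbm : h'.2.choose ∈ ({c, v, w} : Finset V) := hts' ▸ hb'spec.1
    rcases Finset.mem_insert.1 hbm with e | hbm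
    · rw [e] at hb'adj; exact absurd hc'.2 hb'adj
    rcases Finset.mem_insert.1 hbm with e | hbm
    · exact e
    · rw [Finset.mem_singleton.1 hbm] at hb'adj; exact absurd hAwv' hb'adj
  -- w is adjacent to both, so it is in both filters
  have hw1 : w ∈ t.filter (fun u => G.Adj u v) := Finset.mem_filter.2 ⟨hwt, hAwv⟩
  have hw2 : w ∈ t'.filter (fun u => G.Adj u v') := Finset.mem_filter.2 ⟨hwt', hAwv'⟩
  have hkne : k v ≠ k v' := fun e => hvv (k_inj e)
  have hwceq : w = c := by
    rcases hkne.lt_or_gt with hlt | hlt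
    · have hmin := pick_min G ⟨v, t⟩ h (by rw [hbv']; exact hlt) w hw1
      have hmax := pick_max G ⟨v', t'⟩ h' (by rw [hb'v]; exact not_lt.2 hlt.le) w hw2
      rw [hcdef] at hmin
      rw [← hx] at hmax
      exact k_inj (le_antisymm hmax hmin)
    · have hmax := pick_max G ⟨v, t⟩ h (by rw [hbv']; exact not_lt.2 hlt.le) w hw1
      have hmin := pick_min G ⟨v', t'⟩ h' (by rw [hb'v]; exact hlt) w hw2
      rw [hcdef] at hmax
      rw [← hx] at hmin
      exact k_inj (le_antisymm hmax hmin)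
  exact hwc hwceq

end TriNbhdAux

section Main

open TriNbhdAux

variable {V : Type*} [Fintype V] [DecidableEq V] (G : SimpleGraph V) [DecidableRel G.Adj]

private lemma key_nat :
    ∑ v : V, ((G.cliqueFinset 3).filter (fun t => ∃ u ∈ t, u = v ∨ G.Adj u v)).card
      ≤ ∑ v : V, (G.degree v + 1).choose 3 := by
  classical
  set T : V → Finset (Finset V) :=
    fun v => (G.cliqueFinset 3).filter (fun t => ∃ u ∈ t, u = v ∨ G.Adj u v) with hT
  set Q : V → Finset (Finset V) :=
    fun v => (insert v (G.neighborFinset v)).powersetCard 3 with hQ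
  have maps : ∀ p ∈ univ.sigma T, phi G p ∈ univ.sigma Q := by
    rintro ⟨v, t⟩ hp
    rw [Finset.mem_sigma, hT, Finset.mem_filter, SimpleGraph.mem_cliqueFinset_iff] at hp
    obtain ⟨-, ht, hex⟩ := hp
    unfold phi
    split_ifs with h1 h2
    · -- v ∈ t
      rw [Finset.mem_sigma, hQ, Finset.mem_powersetCard]
      refine ⟨mem_univ _, ?_, ht.2⟩
      intro u hu
      by_cases huv : u = v
      · exact huv ▸ mem_insert_self _ _
      · exact mem_insert_of_mem ((SimpleGraph.mem_neighborFinset _ _ _).2 (ht.1 hu h1 huv).symm)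
    · -- main branch
      have hc := pick_mem G ⟨v, t⟩ h2
      rw [Finset.mem_filter] at hc
      rw [Finset.mem_sigma, hQ, Finset.mem_powersetCard]
      refine ⟨mem_univ _, ?_, ?_⟩
      · intro u hu
        rcases Finset.mem_insert.1 hu with rfl | hu
        · exact mem_insert_of_mem ((SimpleGraph.mem_neighborFinset _ _ _).2 hc.2)
        · rcases Finset.mem_erase.1 hu with ⟨hne, hut⟩
          exact mem_insert_of_mem
            ((SimpleGraph.mem_neighborFinset _ _ _).2 (ht.1 hc.1 hut (Ne.symm hne)))
      · rw [Finset.card_insert_of_notMem (fun hmem => h1 (Finset.mem_of_mem_erase hmem)),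
          Finset.card_erase_of_mem hc.1, ht.2]
    · -- all of t adjacent to v
      have hA : (t.filter (fun u => G.Adj u v)).Nonempty := by
        obtain ⟨u, hu, hu'⟩ := hex
        rcases hu' with rfl | hadj
        · exact absurd hu h1
        · exact ⟨u, Finset.mem_filter.2 ⟨hu, hadj⟩⟩
      have hsub : t ⊆ t.filter (fun u => G.Adj u v) := by
        by_contra hcon
        exact h2 ⟨hA, Finset.sdiff_nonempty.2 hcon⟩
      rw [Finset.mem_sigma, hQ, Finset.mem_powersetCard]
      refine ⟨mem_univ _, ?_, ht.2⟩
      intro u hu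
      have := Finset.mem_filter.1 (hsub hu)
      exact mem_insert_of_mem ((SimpleGraph.mem_neighborFinset _ _ _).2 this.2.symm)
  have inj : Set.InjOn (phi G) (univ.sigma T) := by
    rintro ⟨v, t⟩ hp ⟨v', t'⟩ hq heq
    simp only [Finset.mem_coe, Finset.mem_sigma, hT, Finset.mem_filter,
      SimpleGraph.mem_cliqueFinset_iff] at hp hq
    obtain ⟨-, ht, hex⟩ := hp
    obtain ⟨-, ht', hex'⟩ := hq
    have snd_eq : ∀ {a b : (_ : V) × Finset V}, a = b → a.2 = b.2 :=
      fun e => by rw [e]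
    have fst_eq : ∀ {a b : (_ : V) × Finset V}, a = b → a.1 = b.1 :=
      fun e => by rw [e]
    by_cases h1 : v ∈ t
    · rw [phi_of_mem G ⟨v, t⟩ h1] at heq
      by_cases h1' : v' ∈ t'
      · rw [phi_of_mem G ⟨v', t'⟩ h1'] at heq; exact heq
      · by_cases h2' : ((t'.filter (fun u => G.Adj u v')).Nonempty ∧
            (t' \ t'.filter (fun u => G.Adj u v')).Nonempty)
        · rw [phi_of_pick G ⟨v', t'⟩ h1' h2'] at heq
          exact (mixed_absurd G ht h1' h2' (snd_eq heq)).elim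
        · rw [phi_of_other G ⟨v', t'⟩ h1' h2'] at heq; exact heq
    · by_cases h2 : ((t.filter (fun u => G.Adj u v)).Nonempty ∧
          (t \ t.filter (fun u => G.Adj u v)).Nonempty)
      · rw [phi_of_pick G ⟨v, t⟩ h1 h2] at heq
        by_cases h1' : v' ∈ t'
        · rw [phi_of_mem G ⟨v', t'⟩ h1'] at heq
          exact (mixed_absurd G ht' h1 h2 (snd_eq heq.symm)).elim
        · by_cases h2' : ((t'.filter (fun u => G.Adj u v')).Nonempty ∧
              (t' \ t'.filter (fun u => G.Adj u v')).Nonempty)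
          · rw [phi_of_pick G ⟨v', t'⟩ h1' h2'] at heq
            have hx : pick G ⟨v, t⟩ h2 = pick G ⟨v', t'⟩ h2' := fst_eq heq
            have hSS : insert v (t.erase (pick G ⟨v, t⟩ h2))
                = insert v' (t'.erase (pick G ⟨v', t'⟩ h2')) := snd_eq heq
            by_cases hvv : v = v'
            · subst hvv
              have hcm : pick G ⟨v, t⟩ h2 ∈ t := by
                have hm := pick_mem G ⟨v, t⟩ h2
                rw [Finset.mem_filter] at hm; exact hm.1
              have hcm' : pick G ⟨v, t'⟩ h2' ∈ t' := by
                have hm := pick_mem G ⟨v, t'⟩ h2'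
                rw [Finset.mem_filter] at hm; exact hm.1
              have h3 : v ∉ t.erase (pick G ⟨v, t⟩ h2) :=
                fun hm => h1 (Finset.mem_of_mem_erase hm)
              have h4 : v ∉ t'.erase (pick G ⟨v, t'⟩ h2') :=
                fun hm => h1' (Finset.mem_of_mem_erase hm)
              have hE : t.erase (pick G ⟨v, t⟩ h2) = t'.erase (pick G ⟨v, t'⟩ h2') := by
                calc t.erase (pick G ⟨v, t⟩ h2)
                    = (insert v (t.erase (pick G ⟨v, t⟩ h2))).erase v :=
                      (Finset.erase_insert h3).symm
                  _ = (insert v (t'.erase (pick G ⟨v, t'⟩ h2'))).erase v := by rw [hSS]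
                  _ = t'.erase (pick G ⟨v, t'⟩ h2') := Finset.erase_insert h4
              have htt : t = t' := by
                calc t = insert (pick G ⟨v, t⟩ h2) (t.erase (pick G ⟨v, t⟩ h2)) :=
                      (Finset.insert_erase hcm).symm
                  _ = insert (pick G ⟨v, t'⟩ h2') (t'.erase (pick G ⟨v, t'⟩ h2')) := by
                      rw [hE, hx]
                  _ = t' := Finset.insert_erase hcm'
              exact congrArg (Sigma.mk v) htt
            · exact (both_absurd G ht ht' h1 h1' hvv h2 h2' hx hSS).elim
          · rw [phi_of_other G ⟨v', t'⟩ h1' h2'] at heq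
            exact (mixed_absurd G ht' h1 h2 (snd_eq heq.symm)).elim
      · rw [phi_of_other G ⟨v, t⟩ h1 h2] at heq
        by_cases h1' : v' ∈ t'
        · rw [phi_of_mem G ⟨v', t'⟩ h1'] at heq; exact heq
        · by_cases h2' : ((t'.filter (fun u => G.Adj u v')).Nonempty ∧
              (t' \ t'.filter (fun u => G.Adj u v')).Nonempty)
          · rw [phi_of_pick G ⟨v', t'⟩ h1' h2'] at heq
            exact (mixed_absurd G ht h1' h2' (snd_eq heq)).elim
          · rw [phi_of_other G ⟨v', t'⟩ h1' h2'] at heq; exact heq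
  calc ∑ v : V, (T v).card = (univ.sigma T).card := (Finset.card_sigma _ _).symm
    _ ≤ (univ.sigma Q).card := Finset.card_le_card_of_injOn (phi G) maps inj
    _ = ∑ v : V, (Q v).card := Finset.card_sigma _ _
    _ = ∑ v : V, (G.degree v + 1).choose 3 := by
        refine Finset.sum_congr rfl fun v _ => ?_
        rw [hQ, Finset.card_powersetCard,
          Finset.card_insert_of_notMem (G.notMem_neighborFinset_self v),
          G.card_neighborFinset_eq_degree]

end Main

private lemma cast_choose_three (d : ℕ) :
    (((d + 1).choose 3 : ℕ) : ℚ) = ((d : ℚ) ^ 3 - d) / 6 := by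
  induction d with
  | zero => simp [Nat.choose]
  | succ n ih =>
    rw [show n + 1 + 1 = (n + 1) + 1 from rfl, Nat.choose_succ_succ (n + 1) 2]
    push_cast [ih, Nat.cast_choose_two]
    ring

/-- `Σ_v |T_{N[v]}| ≤ Σ_v (d(v)^3 - d(v))/6`, where `|T_{N[v]}|` is the number of triangles
with at least one vertex in the closed neighborhood of `v`. -/
theorem sum_triangles_closed_neighborhoods_le
    (V : Type*) [Fintype V] [DecidableEq V]
    (G : SimpleGraph V) [DecidableRel G.Adj] :
    (∑ v : V,
        (((G.cliqueFinset 3).filter (fun t => ∃ u ∈ t, u = v ∨ G.Adj u v)).card : ℚ))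
      ≤ ∑ v : V, ((G.degree v : ℚ) ^ 3 - (G.degree v : ℚ)) / 6 := by
  have h := key_nat G
  calc (∑ v : V,
        ((((G.cliqueFinset 3).filter (fun t => ∃ u ∈ t, u = v ∨ G.Adj u v)).card : ℚ)))
      = ((∑ v : V,
        ((G.cliqueFinset 3).filter (fun t => ∃ u ∈ t, u = v ∨ G.Adj u v)).card : ℕ) : ℚ) := by
        push_cast; rfl
    _ ≤ ((∑ v : V, (G.degree v + 1).choose 3 : ℕ) : ℚ) := by exact_mod_cast h
    _ = ∑ v : V, ((G.degree v : ℚ) ^ 3 - (G.degree v : ℚ)) / 6 := by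
        rw [Nat.cast_sum]
        exact Finset.sum_congr rfl fun v _ => cast_choose_three _
end

section
/- For any positive integers n, d ≥ 1, any simple graph on n vertices with maximum degree at most d has at most q·(2^{d+1} − 1) + (2^r − 1) nonempty cliques, where n = q(d+1) + r with 0 ≤ r ≤ d. -/
set_option linter.unusedSectionVars false
set_option linter.unusedVariables false
set_option maxHeartbeats 1000000
open Finset

namespace GalvinAux

variable {V : Type*} [Fintype V] [DecidableEq V] (G : SimpleGraph V) [DecidableRel G.Adj]

def CL (A : Finset V) : Finset (Finset V) :=
  A.powerset.filter (fun s => s.Nonempty ∧ G.IsClique (↑s : Set V))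

lemma mem_CL {A s : Finset V} :
    s ∈ CL G A ↔ s ⊆ A ∧ s.Nonempty ∧ G.IsClique (↑s : Set V) := by
  simp [CL, and_assoc]

lemma CL_empty : CL G (∅ : Finset V) = ∅ := by
  ext s
  simp only [mem_CL, Finset.subset_empty, Finset.notMem_empty, iff_false]
  rintro ⟨rfl, h2, -⟩
  exact Finset.not_nonempty_empty h2

lemma card_CL_add_one_le (A : Finset V) : (CL G A).card + 1 ≤ 2 ^ A.card := by
  have h1 : CL G A ⊆ A.powerset.erase ∅ := by
    intro s hs
    rw [mem_CL] at hs
    exact Finset.mem_erase.2 ⟨Finset.nonempty_iff_ne_empty.1 hs.2.1, Finset.mem_powerset.2 hs.1⟩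
  have h2 := Finset.card_le_card h1
  have h3 : (A.powerset.erase ∅).card = 2 ^ A.card - 1 := by
    rw [Finset.card_erase_of_mem (by simp), Finset.card_powerset]
  have h4 : 1 ≤ 2 ^ A.card := Nat.one_le_two_pow
  omega

lemma sum_cliques_containing {M : Type*} [AddCommMonoid M] {A : Finset V} {v : V} (hv : v ∈ A)
    (f : Finset V → M) :
    ∑ s ∈ (CL G A).filter (fun s => v ∈ s), f s
      = f {v} + ∑ t ∈ CL G (G.neighborFinset v ∩ A), f (insert v t) := by
  have hvn : v ∉ G.neighborFinset v ∩ A := by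
    simp [SimpleGraph.mem_neighborFinset]
  have key : ∑ s ∈ (CL G A).filter (fun s => v ∈ s), f s
      = ∑ t ∈ insert ∅ (CL G (G.neighborFinset v ∩ A)), f (insert v t) := by
    refine Finset.sum_nbij' (fun s => s.erase v) (fun t => insert v t) ?_ ?_ ?_ ?_ ?_
    · intro s hs
      simp only [Finset.mem_filter, mem_CL] at hs
      obtain ⟨⟨hsA, hne, hcl⟩, hvs⟩ := hs
      rcases Finset.eq_empty_or_nonempty (s.erase v) with he | hne'
      · simp [he]
      · refine Finset.mem_insert.2 (Or.inr ?_)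
        rw [mem_CL]
        refine ⟨?_, hne', hcl.subset (by simp [Finset.coe_subset, Finset.erase_subset])⟩
        intro u hu
        obtain ⟨huv, hus⟩ := Finset.mem_erase.1 hu
        refine Finset.mem_inter.2 ⟨?_, hsA hus⟩
        rw [SimpleGraph.mem_neighborFinset]
        exact hcl hvs hus (Ne.symm huv)
    · intro t ht
      rcases Finset.mem_insert.1 ht with rfl | ht'
      · simp only [insert_empty_eq, Finset.mem_filter, mem_CL]
        exact ⟨⟨by simpa using hv, ⟨v, by simp⟩,
          by simp [SimpleGraph.isClique_iff, Set.pairwise_singleton]⟩, by simp⟩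
      · rw [mem_CL] at ht'
        obtain ⟨htN, hne, hcl⟩ := ht'
        simp only [Finset.mem_filter, mem_CL]
        refine ⟨⟨?_, ⟨v, by simp⟩, ?_⟩, by simp⟩
        · intro u hu
          rcases Finset.mem_insert.1 hu with rfl | hu'
          · exact hv
          · exact (Finset.mem_inter.1 (htN hu')).2
        · rw [Finset.coe_insert]
          refine hcl.insert ?_
          intro b hb _
          have := (Finset.mem_inter.1 (htN hb)).1
          rwa [SimpleGraph.mem_neighborFinset] at this
    · intro s hs
      simp only [Finset.mem_filter] at hs
      exact Finset.insert_erase hs.2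
    · intro t ht
      apply Finset.erase_insert
      rcases Finset.mem_insert.1 ht with rfl | ht'
      · simp
      · rw [mem_CL] at ht'
        exact fun hvt => hvn (ht'.1 hvt)
    · intro s hs
      simp only [Finset.mem_filter] at hs
      rw [Finset.insert_erase hs.2]
  rw [key, Finset.sum_insert (by simp [mem_CL])]
  simp

lemma card_cliques_containing {A : Finset V} {v : V} (hv : v ∈ A) :
    ((CL G A).filter (fun s => v ∈ s)).card
      = (CL G (G.neighborFinset v ∩ A)).card + 1 := by
  have := sum_cliques_containing G hv (fun _ => (1 : ℕ))
  simp only [Finset.sum_const, smul_eq_mul, mul_one] at this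
  omega

lemma filter_not_mem_CL {A : Finset V} {x : V} :
    (CL G A).filter (fun s => x ∉ s) = CL G (A.erase x) := by
  ext s
  simp only [Finset.mem_filter, mem_CL]
  constructor
  · rintro ⟨⟨h1, h2, h3⟩, h4⟩
    exact ⟨Finset.subset_erase.2 ⟨h1, h4⟩, h2, h3⟩
  · rintro ⟨h1, h2, h3⟩
    have := Finset.subset_erase.1 h1
    exact ⟨⟨this.1, h2, h3⟩, this.2⟩

lemma sum_CL_split {x : V} {A : Finset V} (hx : x ∈ A) (f : Finset V → ℤ) :
    ∑ s ∈ CL G A, f s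
      = (∑ s ∈ CL G (A.erase x), f s) + f {x}
        + ∑ t ∈ CL G (G.neighborFinset x ∩ A), f (insert x t) := by
  have h := Finset.sum_filter_add_sum_filter_not (CL G A) (fun s => x ∈ s) f
  rw [← h, filter_not_mem_CL, sum_cliques_containing G hx f]
  ring

lemma not_mem_nbr_inter {x : V} {A : Finset V} : x ∉ G.neighborFinset x ∩ A := by
  simp [SimpleGraph.mem_neighborFinset]

lemma nbr_inter_sub_erase {x : V} {A : Finset V} :
    G.neighborFinset x ∩ A ⊆ A.erase x := by
  intro u hu
  obtain ⟨h1, h2⟩ := Finset.mem_inter.1 hu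
  rw [SimpleGraph.mem_neighborFinset] at h1
  exact Finset.mem_erase.2 ⟨fun h => G.ne_of_adj h1 h.symm, h2⟩

lemma two_pow_ge_mul {c δ : ℕ} (h : δ + 2 ≤ c) : ((c : ℤ) - δ) * 2 ^ δ ≤ 2 ^ (c - 1) := by
  have h1 : c - δ - 1 < 2 ^ (c - δ - 1) := Nat.lt_two_pow_self
  have h2 : c - δ ≤ 2 ^ (c - δ - 1) := by omega
  have h3 : (c : ℤ) - δ ≤ 2 ^ (c - δ - 1) := by
    calc (c : ℤ) - δ ≤ ((c - δ : ℕ) : ℤ) := by push_cast; omega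
      _ ≤ ((2 ^ (c - δ - 1) : ℕ) : ℤ) := by exact_mod_cast h2
      _ = 2 ^ (c - δ - 1) := by push_cast; ring
  calc ((c : ℤ) - δ) * 2 ^ δ ≤ 2 ^ (c - δ - 1) * 2 ^ δ :=
        mul_le_mul_of_nonneg_right h3 (by positivity)
    _ = 2 ^ (c - δ - 1 + δ) := by rw [← pow_add]
    _ = 2 ^ (c - 1) := by congr 1; omega

/-- **Lemma A**: key weighted inequality over cliques. -/
lemma lemA (A : Finset V) :
    (∑ s ∈ CL G A, ((A.card + 2 : ℤ) - 2 * s.card)) + ((A.card : ℤ) + 2)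
      ≤ 2 ^ (A.card + 1) := by
  induction A using Finset.strongInductionOn with
  | _ A ih =>
  rcases Finset.eq_empty_or_nonempty A with rfl | hA
  · rw [CL_empty]
    simp
  have hx' : ∃ x ∈ A, (G.neighborFinset x ∩ A).card + 2 ≤ A.card ∨
      ((2:ℤ) ^ (A.card - 1) - 1 ≤ ((CL G (G.neighborFinset x ∩ A)).card : ℤ)
        ∧ (G.neighborFinset x ∩ A).card = A.card - 1) := by
    by_cases hcl : G.IsClique (↑A : Set V)
    · obtain ⟨x, hx⟩ := hA
      refine ⟨x, hx, Or.inr ?_⟩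
      have hNeq : G.neighborFinset x ∩ A = A.erase x := by
        apply Finset.Subset.antisymm (nbr_inter_sub_erase G)
        intro u hu
        obtain ⟨hux, huA⟩ := Finset.mem_erase.1 hu
        refine Finset.mem_inter.2 ⟨?_, huA⟩
        rw [SimpleGraph.mem_neighborFinset]
        exact hcl hx huA (Ne.symm hux)
      constructor
      · rw [hNeq]
        have hsub : (A.erase x).powerset.erase ∅ ⊆ CL G (A.erase x) := by
          intro s hs
          obtain ⟨hne, hps⟩ := Finset.mem_erase.1 hs
          rw [Finset.mem_powerset] at hps
          rw [mem_CL]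
          refine ⟨hps, Finset.nonempty_iff_ne_empty.2 hne, hcl.subset ?_⟩
          refine subset_trans (Finset.coe_subset.2 hps) ?_
          exact Finset.coe_subset.2 (Finset.erase_subset x A)
        have hcard := Finset.card_le_card hsub
        have h3 : ((A.erase x).powerset.erase ∅).card = 2 ^ (A.erase x).card - 1 := by
          rw [Finset.card_erase_of_mem (by simp), Finset.card_powerset]
        rw [h3, Finset.card_erase_of_mem hx] at hcard
        have h4 : 1 ≤ 2 ^ (A.card - 1) := Nat.one_le_two_pow
        have h5 := (Nat.cast_le (α := ℤ)).2 hcard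
        calc ((2:ℤ) ^ (A.card - 1) - 1) = (((2 ^ (A.card - 1) - 1 : ℕ)) : ℤ) := by
              push_cast [Nat.cast_sub h4]; ring
          _ ≤ _ := h5
      · rw [hNeq]; exact Finset.card_erase_of_mem hx
    · rw [SimpleGraph.isClique_iff, Set.Pairwise] at hcl
      push_neg at hcl
      obtain ⟨x, hx, y, hy, hxy, hnadj⟩ := hcl
      simp only [Finset.mem_coe] at hx hy
      refine ⟨x, hx, Or.inl ?_⟩
      have hsub : G.neighborFinset x ∩ A ⊆ (A.erase x).erase y := by
        intro u hu
        refine Finset.mem_erase.2 ⟨?_, nbr_inter_sub_erase G hu⟩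
        rintro rfl
        have := (Finset.mem_inter.1 hu).1
        rw [SimpleGraph.mem_neighborFinset] at this
        exact hnadj this
      have h1 := Finset.card_le_card hsub
      have h2 : y ∈ A.erase x := Finset.mem_erase.2 ⟨fun h => hxy (by rw [h]), hy⟩
      have h3 := Finset.card_erase_of_mem h2
      have h4 := Finset.card_erase_of_mem hx
      have h5 : 1 ≤ A.card := Finset.card_pos.2 hA
      have h6 : 1 ≤ (A.erase x).card := Finset.card_pos.2 ⟨y, h2⟩
      omega
  obtain ⟨x, hx, hcase⟩ := hx'
  set c := A.card with hc
  have hc1 : 1 ≤ c := Finset.card_pos.2 hA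
  set Nx := G.neighborFinset x ∩ A with hNx
  set δ := Nx.card with hδ
  have hNsub : Nx ⊂ A :=
    Finset.ssubset_iff_of_subset (fun u hu => (Finset.mem_inter.1 hu).2) |>.2
      ⟨x, hx, not_mem_nbr_inter G⟩
  have hErase : A.erase x ⊂ A := Finset.erase_ssubset hx
  have hEcard : (A.erase x).card = c - 1 := Finset.card_erase_of_mem hx
  have hδle : δ ≤ c - 1 := by
    have := Finset.card_le_card (nbr_inter_sub_erase G (x := x) (A := A))
    omega
  have hcast1 : ((c - 1 : ℕ) : ℤ) = (c : ℤ) - 1 := by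
    push_cast [Nat.cast_sub hc1]; ring
  have hpowc : (2:ℤ) ^ c = 2 * 2 ^ (c - 1) := by
    conv_lhs => rw [show c = (c - 1) + 1 by omega]
    rw [pow_succ]; ring
  -- split the sum
  rw [sum_CL_split G hx]
  -- Term 1
  have ih1 := ih _ hErase
  rw [hEcard, show c - 1 + 1 = c by omega] at ih1
  have hP1 : ((CL G (A.erase x)).card : ℤ) ≤ 2 ^ (c - 1) - 1 := by
    have h := card_CL_add_one_le G (A.erase x)
    rw [hEcard] at h
    have h' := (Nat.cast_le (α := ℤ)).2 h
    push_cast at h'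
    linarith
  have hT1 : ∑ s ∈ CL G (A.erase x), ((c + 2 : ℤ) - 2 * s.card)
      ≤ (2 ^ c - (c : ℤ) - 1) + (2 ^ (c - 1) - 1) := by
    have e1 : ∀ s ∈ CL G (A.erase x),
        ((c + 2 : ℤ) - 2 * s.card) = (((c - 1 : ℕ) : ℤ) + 2 - 2 * s.card) + 1 := by
      intro s _; rw [hcast1]; ring
    rw [Finset.sum_congr rfl e1, Finset.sum_add_distrib, Finset.sum_const, nsmul_eq_mul, mul_one]
    linarith [hP1, ih1, hcast1]
  -- Term 3
  have ih2 := ih _ hNsub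
  have hP2 : ((CL G Nx).card : ℤ) ≤ 2 ^ δ - 1 := by
    have h := card_CL_add_one_le G Nx
    have h' := (Nat.cast_le (α := ℤ)).2 h
    push_cast at h'
    linarith
  have hP2' : (0:ℤ) ≤ ((CL G Nx).card : ℤ) := by positivity
  have hxNx : x ∉ Nx := not_mem_nbr_inter G
  have hT3 : ∑ t ∈ CL G Nx, ((c + 2 : ℤ) - 2 * (insert x t).card)
      ≤ 2 ^ (c - 1) - (c : ℤ) := by
    have e1 : ∀ t ∈ CL G Nx,
        ((c + 2 : ℤ) - 2 * (insert x t).card)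
          = (((δ : ℤ) + 2) - 2 * t.card) + ((c : ℤ) - δ - 2) := by
      intro t ht
      rw [mem_CL] at ht
      have hxt : x ∉ t := fun h => hxNx (ht.1 h)
      rw [Finset.card_insert_of_notMem hxt]
      push_cast
      ring
    rw [Finset.sum_congr rfl e1, Finset.sum_add_distrib, Finset.sum_const, nsmul_eq_mul]
    have hsum2 : ∑ t ∈ CL G Nx, (((δ : ℤ) + 2) - 2 * t.card) ≤ 2 ^ (δ + 1) - ((δ : ℤ) + 2) := by
      linarith [ih2]
    rcases hcase with hlow | ⟨hbig, hδeq⟩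
    · -- δ + 2 ≤ c
      have hcoef : (0:ℤ) ≤ (c : ℤ) - δ - 2 := by
        have := (Nat.cast_le (α := ℤ)).2 hlow
        push_cast at this
        linarith
      have hmul : ((CL G Nx).card : ℤ) * ((c : ℤ) - δ - 2)
          ≤ (2 ^ δ - 1) * ((c : ℤ) - δ - 2) :=
        mul_le_mul_of_nonneg_right hP2 hcoef
      have hkey := two_pow_ge_mul (c := c) (δ := δ) hlow
      have hpowδ : (2:ℤ) ^ (δ + 1) = 2 * 2 ^ δ := by rw [pow_succ]; ring
      nlinarith [hsum2, hmul, hkey]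
    · -- δ = c - 1, big clique case
      have hδc : ((δ : ℤ)) = (c : ℤ) - 1 := by rw [hδeq] at *; exact hcast1
      have hcoef : (c : ℤ) - δ - 2 = -1 := by rw [hδc]; ring
      have hpowδ : (2:ℤ) ^ (δ + 1) = 2 * 2 ^ (c - 1) := by
        rw [hδeq]; rw [show c - 1 + 1 = c by omega]; exact hpowc
      have hbig' : (2:ℤ) ^ (c-1) - 1 ≤ ((CL G Nx).card : ℤ) := hbig
      rw [hcoef]
      have hδpow : (2:ℤ) ^ δ = 2 ^ (c - 1) := by rw [hδeq]
      nlinarith [hsum2, hbig']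
  -- assemble
  have hfx : ((c + 2 : ℤ) - 2 * ({x} : Finset V).card) = (c : ℤ) := by
    simp
  rw [hfx]
  have hpow2 : (2:ℤ) ^ (c+1) = 2 * 2 ^ c := by rw [pow_succ]; ring
  linarith [hT1, hT3]


lemma card_filter_split (S : Finset (Finset V)) (p q : Finset V → Prop)
    [DecidablePred p] [DecidablePred q] :
    (S.filter (fun s => p s)).card
      = (S.filter (fun s => p s ∧ q s)).card + (S.filter (fun s => p s ∧ ¬ q s)).card := by
  rw [← Finset.filter_filter, ← Finset.filter_filter,
    Finset.card_filter_add_card_filter_not (p := q)]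


/-- **Lemma B**: there is a vertex whose closed neighborhood is met by few cliques. -/
lemma lemB {A : Finset V} (hA : A.Nonempty) :
    ∃ v ∈ A,
      ((CL G A).filter
        (fun s => (s ∩ (insert v (G.neighborFinset v ∩ A))).Nonempty)).card + 1
      ≤ 2 ^ ((G.neighborFinset v ∩ A).card + 1) := by
  obtain ⟨v, hv, hmax⟩ :=
    Finset.exists_max_image A (fun u => ((CL G A).filter (fun s => u ∈ s)).card) hA
  refine ⟨v, hv, ?_⟩
  set NB := G.neighborFinset v ∩ A with hNB
  set Wv := insert v NB with hWvdef
  set k := NB.card with hk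
  have hvNB : v ∉ NB := not_mem_nbr_inter G
  have hNBsubA : NB ⊆ A := fun u hu => (Finset.mem_inter.1 hu).2
  -- (i) a clique containing v is inside Wv
  have hWsub : ∀ s ∈ CL G A, v ∈ s → s ⊆ Wv := by
    intro s hs hvs u hu
    rw [mem_CL] at hs
    by_cases huv : u = v
    · subst huv; exact Finset.mem_insert_self u NB
    · have hadj : G.Adj v u := hs.2.2 (Finset.mem_coe.2 hvs) (Finset.mem_coe.2 hu)
        (fun h => huv h.symm)
      refine Finset.mem_insert_of_mem (Finset.mem_inter.2 ⟨?_, hs.1 hu⟩)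
      rwa [SimpleGraph.mem_neighborFinset]
  -- cliques inside Wv avoiding v = cliques of NB
  have hEq1 : (CL G A).filter (fun s => v ∉ s ∧ s ⊆ Wv) = CL G NB := by
    ext s
    simp only [Finset.mem_filter, mem_CL]
    constructor
    · rintro ⟨⟨h1, h2, h3⟩, h4, h5⟩
      refine ⟨?_, h2, h3⟩
      intro u hu
      rcases Finset.mem_insert.1 (h5 hu) with rfl | h
      · exact absurd hu h4
      · exact h
    · rintro ⟨h1, h2, h3⟩
      exact ⟨⟨h1.trans hNBsubA, h2, h3⟩, fun h => hvNB (h1 h),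
        h1.trans (Finset.subset_insert v NB)⟩
  have hcv : ((CL G A).filter (fun s => v ∈ s)).card = (CL G NB).card + 1 :=
    card_cliques_containing G hv
  -- per-vertex identity : c_u = 2 * c'_uv + s_u  for u ∈ NB
  have hueq : ∀ u ∈ NB,
      ((CL G A).filter (fun s => u ∈ s)).card
        = 2 * ((CL G NB).filter (fun s => u ∈ s)).card
          + ((CL G A).filter (fun s => u ∈ s ∧ ¬ s ⊆ Wv)).card := by
    intro u hu
    have huv : u ≠ v := fun h => hvNB (h ▸ hu)
    have h1 : ((CL G A).filter (fun s => u ∈ s)).card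
        = ((CL G A).filter (fun s => u ∈ s ∧ s ⊆ Wv)).card
          + ((CL G A).filter (fun s => u ∈ s ∧ ¬ s ⊆ Wv)).card :=
      card_filter_split _ _ _
    have h2 : ((CL G A).filter (fun s => u ∈ s ∧ s ⊆ Wv)).card
        = ((CL G A).filter (fun s => (u ∈ s ∧ s ⊆ Wv) ∧ v ∈ s)).card
          + ((CL G A).filter (fun s => (u ∈ s ∧ s ⊆ Wv) ∧ v ∉ s)).card :=
      card_filter_split _ _ _
    have h3 : (CL G A).filter (fun s => (u ∈ s ∧ s ⊆ Wv) ∧ v ∈ s)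
        = (CL G A).filter (fun s => v ∈ s ∧ u ∈ s) := by
      apply Finset.filter_congr
      intro s hs
      constructor
      · rintro ⟨⟨h4, h5⟩, h6⟩; exact ⟨h6, h4⟩
      · rintro ⟨h6, h4⟩; exact ⟨⟨h4, hWsub s hs h6⟩, h6⟩
    have h4 : (CL G A).filter (fun s => (u ∈ s ∧ s ⊆ Wv) ∧ v ∉ s)
        = (CL G NB).filter (fun s => u ∈ s) := by
      rw [← hEq1, Finset.filter_filter]
      apply Finset.filter_congr
      intro s hs
      constructor
      · rintro ⟨⟨h5, h6⟩, h7⟩; exact ⟨⟨h7, h6⟩, h5⟩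
      · rintro ⟨⟨h7, h6⟩, h5⟩; exact ⟨⟨h5, h6⟩, h7⟩
    have h5 : ((CL G A).filter (fun s => v ∈ s ∧ u ∈ s)).card
        = ((CL G NB).filter (fun s => u ∈ s)).card := by
      have hsum := sum_cliques_containing G hv (fun s => if u ∈ s then (1:ℕ) else 0)
      have hL : ∑ s ∈ (CL G A).filter (fun s => v ∈ s), (if u ∈ s then (1:ℕ) else 0)
          = ((CL G A).filter (fun s => v ∈ s ∧ u ∈ s)).card := by
        rw [← Finset.card_filter, Finset.filter_filter]
      have hR1 : (if u ∈ ({v} : Finset V) then (1:ℕ) else 0) = 0 := by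
        simp [huv]
      have hR2 : ∑ t ∈ CL G NB, (if u ∈ insert v t then (1:ℕ) else 0)
          = ((CL G NB).filter (fun s => u ∈ s)).card := by
        have : ∀ t ∈ CL G NB, (if u ∈ insert v t then (1:ℕ) else 0)
            = (if u ∈ t then (1:ℕ) else 0) := by
          intro t _
          congr 1
          simp [Finset.mem_insert, huv]
        rw [Finset.sum_congr rfl this, ← Finset.card_filter]
      rw [hL, hR1, hR2] at hsum
      omega
    have h3c := congrArg Finset.card h3
    have h4c := congrArg Finset.card h4
    omega
  -- straddler bound
  have hstrad : ((CL G A).filter (fun s => (s ∩ Wv).Nonempty ∧ ¬ s ⊆ Wv)).card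
      ≤ ∑ u ∈ NB, ((CL G A).filter (fun s => u ∈ s ∧ ¬ s ⊆ Wv)).card := by
    calc ((CL G A).filter (fun s => (s ∩ Wv).Nonempty ∧ ¬ s ⊆ Wv)).card
        ≤ (NB.biUnion (fun u => (CL G A).filter (fun s => u ∈ s ∧ ¬ s ⊆ Wv))).card := by
          apply Finset.card_le_card
          intro s hs
          simp only [Finset.mem_filter] at hs
          obtain ⟨hsCL, ⟨w, hw⟩, hnsub⟩ := hs
          have hws : w ∈ s := (Finset.mem_inter.1 hw).1
          have hwW : w ∈ Wv := (Finset.mem_inter.1 hw).2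
          rcases Finset.mem_insert.1 hwW with rfl | hwNB
          · exact absurd (hWsub s hsCL hws) hnsub
          · exact Finset.mem_biUnion.2 ⟨w, hwNB,
              Finset.mem_filter.2 ⟨hsCL, hws, hnsub⟩⟩
      _ ≤ _ := Finset.card_biUnion_le
  -- meet decomposition
  have hmeet : ((CL G A).filter (fun s => (s ∩ Wv).Nonempty)).card
      = (((CL G A).filter (fun s => v ∈ s)).card + (CL G NB).card)
        + ((CL G A).filter (fun s => (s ∩ Wv).Nonempty ∧ ¬ s ⊆ Wv)).card := by
    have h1 : ((CL G A).filter (fun s => (s ∩ Wv).Nonempty)).card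
        = ((CL G A).filter (fun s => (s ∩ Wv).Nonempty ∧ s ⊆ Wv)).card
          + ((CL G A).filter (fun s => (s ∩ Wv).Nonempty ∧ ¬ s ⊆ Wv)).card :=
      card_filter_split _ _ _
    have h2 : (CL G A).filter (fun s => (s ∩ Wv).Nonempty ∧ s ⊆ Wv)
        = (CL G A).filter (fun s => s ⊆ Wv) := by
      apply Finset.filter_congr
      intro s hs
      rw [mem_CL] at hs
      constructor
      · rintro ⟨-, h⟩; exact h
      · intro h
        refine ⟨?_, h⟩
        rw [Finset.inter_eq_left.2 h]
        exact hs.2.1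
    have h3 : ((CL G A).filter (fun s => s ⊆ Wv)).card
        = ((CL G A).filter (fun s => s ⊆ Wv ∧ v ∈ s)).card
          + ((CL G A).filter (fun s => s ⊆ Wv ∧ v ∉ s)).card :=
      card_filter_split _ _ _
    have h4 : (CL G A).filter (fun s => s ⊆ Wv ∧ v ∈ s)
        = (CL G A).filter (fun s => v ∈ s) := by
      apply Finset.filter_congr
      intro s hs
      constructor
      · rintro ⟨-, h⟩; exact h
      · intro h; exact ⟨hWsub s hs h, h⟩
    have h5 : (CL G A).filter (fun s => s ⊆ Wv ∧ v ∉ s)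
        = CL G NB := by
      rw [← hEq1]
      apply Finset.filter_congr
      intro s _
      exact ⟨fun ⟨a, b⟩ => ⟨b, a⟩, fun ⟨a, b⟩ => ⟨b, a⟩⟩
    rw [h1, h2, h3, h4, h5]
  -- counting sums of c'_uv
  have hLsum : ∑ u ∈ NB, ((CL G NB).filter (fun s => u ∈ s)).card
      = ∑ t ∈ CL G NB, t.card := by
    have e1 : ∀ u ∈ NB, ((CL G NB).filter (fun s => u ∈ s)).card
        = ∑ t ∈ CL G NB, (if u ∈ t then (1:ℕ) else 0) := by
      intro u _
      rw [Finset.card_filter]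
    rw [Finset.sum_congr rfl e1, Finset.sum_comm]
    apply Finset.sum_congr rfl
    intro t ht
    rw [mem_CL] at ht
    rw [← Finset.card_filter]
    rw [Finset.filter_mem_eq_inter, Finset.inter_eq_right.2 ht.1]
  -- sum inequality
  have hsumineq : ((CL G A).filter (fun s => (s ∩ Wv).Nonempty ∧ ¬ s ⊆ Wv)).card
      + 2 * (∑ t ∈ CL G NB, t.card)
      ≤ k * ((CL G NB).card + 1) := by
    calc ((CL G A).filter (fun s => (s ∩ Wv).Nonempty ∧ ¬ s ⊆ Wv)).card
          + 2 * (∑ t ∈ CL G NB, t.card)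
        ≤ (∑ u ∈ NB, ((CL G A).filter (fun s => u ∈ s ∧ ¬ s ⊆ Wv)).card)
          + 2 * ∑ u ∈ NB, ((CL G NB).filter (fun s => u ∈ s)).card := by
          rw [hLsum]
          exact Nat.add_le_add_right hstrad _
      _ = ∑ u ∈ NB, (((CL G A).filter (fun s => u ∈ s ∧ ¬ s ⊆ Wv)).card
            + 2 * ((CL G NB).filter (fun s => u ∈ s)).card) := by
          rw [Finset.sum_add_distrib, Finset.mul_sum]
      _ ≤ ∑ u ∈ NB, ((CL G NB).card + 1) := by
          apply Finset.sum_le_sum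
          intro u hu
          have := hueq u hu
          have hm := hmax u (hNBsubA hu)
          rw [← hcv]
          omega
      _ = k * ((CL G NB).card + 1) := by
          rw [Finset.sum_const, smul_eq_mul]
  -- lemA at NB
  have hA2 := lemA G NB
  have hexp : ∑ t ∈ CL G NB, ((k + 2 : ℤ) - 2 * t.card)
      = (k + 2 : ℤ) * ((CL G NB).card : ℤ)
        - 2 * ((∑ t ∈ CL G NB, t.card : ℕ) : ℤ) := by
    rw [Finset.sum_sub_distrib, Finset.sum_const, nsmul_eq_mul, ← Finset.mul_sum]
    push_cast
    ring
  rw [hexp] at hA2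
  -- final assembly in ℤ
  have hfin : (((CL G A).filter (fun s => (s ∩ Wv).Nonempty)).card : ℤ) + 1
      ≤ 2 ^ (k + 1) := by
    have c1 : ((((CL G A).filter (fun s => (s ∩ Wv).Nonempty)).card : ℕ) : ℤ)
        = ((((CL G A).filter (fun s => v ∈ s)).card : ℕ) : ℤ)
          + (((CL G NB).card : ℕ) : ℤ)
          + ((((CL G A).filter (fun s => (s ∩ Wv).Nonempty ∧ ¬ s ⊆ Wv)).card : ℕ) : ℤ) := by
      exact_mod_cast congrArg (Nat.cast (R := ℤ)) hmeet
    have c2 : ((((CL G A).filter (fun s => (s ∩ Wv).Nonempty ∧ ¬ s ⊆ Wv)).card : ℕ) : ℤ)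
          + 2 * ((∑ t ∈ CL G NB, t.card : ℕ) : ℤ)
        ≤ (k : ℤ) * (((CL G NB).card : ℤ) + 1) := by
      exact_mod_cast hsumineq
    have c3 : ((((CL G A).filter (fun s => v ∈ s)).card : ℕ) : ℤ)
        = ((CL G NB).card : ℤ) + 1 := by
      exact_mod_cast hcv
    linarith [hA2, c1, c2, c3]
  exact_mod_cast hfin


/-- target count function -/
def ff (d n : ℕ) : ℕ := (n / (d+1)) * (2^(d+1) - 1) + (2^(n % (d+1)) - 1)

lemma ffstep (d w m : ℕ) (hw1 : 1 ≤ w) (hwD : w ≤ d+1) (hwm : w ≤ m) :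
    2^w - 1 + ff d (m - w) ≤ ff d m := by
  set D := d + 1 with hD
  have hD0 : 0 < D := by omega
  have hm := (Nat.div_add_mod m D)
  set a := m / D with ha
  set b := m % D with hb
  have hbD : b < D := Nat.mod_lt _ hD0
  by_cases hwb : w ≤ b
  · -- case w ≤ b
    have hsub : m - w = (b - w) + D * a := by omega
    have hdiv : (m - w) / D = a := by
      rw [hsub, Nat.add_mul_div_left _ _ hD0, Nat.div_eq_of_lt (by omega)]
      omega
    have hmod : (m - w) % D = b - w := by
      rw [hsub, Nat.add_mul_mod_self_left, Nat.mod_eq_of_lt (by omega)]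
    have key : 2^w + 2^(b-w) ≤ 2^b + 1 := by
      have hXY : 2^w * 2^(b-w) = 2^b := by
        rw [← pow_add]; congr 1; omega
      have hX : 1 ≤ 2^w := Nat.one_le_two_pow
      have hY : 1 ≤ 2^(b-w) := Nat.one_le_two_pow
      nlinarith [hXY, hX, hY]
    unfold ff
    rw [hdiv, hmod, ← hD, ← ha, ← hb]
    have h1 : 1 ≤ 2^w := Nat.one_le_two_pow
    have h2 : 1 ≤ 2^(b-w) := Nat.one_le_two_pow
    have h3 : 1 ≤ 2^b := Nat.one_le_two_pow
    omega
  · -- case b < w : borrow from a full block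
    push_neg at hwb
    have ha1 : 1 ≤ a := by
      rcases Nat.eq_zero_or_pos a with h0 | h
      · exfalso
        rw [h0, Nat.mul_zero, Nat.zero_add] at hm
        omega
      · exact h
    obtain ⟨a', hA'⟩ : ∃ a', a = a' + 1 := ⟨a - 1, by omega⟩
    set e := D + b - w with he
    have heD : e < D := by omega
    have hsub : m - w = e + D * a' := by
      have h5 : D * a = D * a' + D := by rw [hA']; ring
      omega
    have hdiv : (m - w) / D = a' := by
      rw [hsub, Nat.add_mul_div_left _ _ hD0, Nat.div_eq_of_lt heD]
      omega
    have hmod : (m - w) % D = e := by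
      rw [hsub, Nat.add_mul_mod_self_left, Nat.mod_eq_of_lt heD]
    have key : 2^w + 2^e ≤ 2^D + 2^b := by
      set s := w - b with hs
      have hw' : 2^w = 2^b * 2^s := by rw [← pow_add]; congr 1; omega
      have hDe : 2^D = 2^e * 2^s := by rw [← pow_add]; congr 1; omega
      have hbe : 2^b ≤ 2^e := Nat.pow_le_pow_right (by omega) (by omega)
      have hZ : 1 ≤ 2^s := Nat.one_le_two_pow
      nlinarith [hw', hDe, hbe, hZ]
    unfold ff
    rw [hdiv, hmod, ← hD, ← ha, ← hb]
    have h1 : 1 ≤ 2^w := Nat.one_le_two_pow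
    have h2 : 1 ≤ 2^e := Nat.one_le_two_pow
    have h3 : 1 ≤ 2^b := Nat.one_le_two_pow
    have h4 : 1 ≤ 2^D := Nat.one_le_two_pow
    have hq : a * (2^D - 1) = a' * (2^D - 1) + (2^D - 1) := by rw [hA']; ring
    omega

/-- main induction -/
lemma mainind (d : ℕ) (hdeg : ∀ v : V, G.degree v ≤ d) :
    ∀ (n : ℕ) (A : Finset V), A.card = n → (CL G A).card ≤ ff d n := by
  intro n
  induction n using Nat.strong_induction_on with
  | _ n ih =>
  intro A hAc
  rcases Finset.eq_empty_or_nonempty A with rfl | hA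
  · rw [CL_empty]
    simp
  obtain ⟨v, hv, hB⟩ := lemB G hA
  set NB := G.neighborFinset v ∩ A with hNB
  set Wv := insert v NB with hWv
  set k := NB.card with hk
  have hvNB : v ∉ NB := not_mem_nbr_inter G
  have hNBsubA : NB ⊆ A := fun u hu => (Finset.mem_inter.1 hu).2
  have hWcard : Wv.card = k + 1 := Finset.card_insert_of_notMem hvNB
  have hWA : Wv ⊆ A := Finset.insert_subset hv hNBsubA
  have hkd : k ≤ d := by
    have h1 : NB ⊆ G.neighborFinset v := Finset.inter_subset_left
    have h2 := Finset.card_le_card h1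
    have h3 : (G.neighborFinset v).card = G.degree v := G.card_neighborFinset_eq_degree v
    have h4 := hdeg v
    omega
  have hn1 : 1 ≤ n := by
    rw [← hAc]
    exact Finset.card_pos.2 hA
  have hkn : k + 1 ≤ n := by
    rw [← hAc, ← hWcard]
    exact Finset.card_le_card hWA
  -- split
  have hsplit : (CL G A).card
      = ((CL G A).filter (fun s => (s ∩ Wv).Nonempty)).card
        + ((CL G A).filter (fun s => ¬ (s ∩ Wv).Nonempty)).card :=
    (Finset.card_filter_add_card_filter_not _).symm
  have hrest : (CL G A).filter (fun s => ¬ (s ∩ Wv).Nonempty) = CL G (A \ Wv) := by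
    ext s
    simp only [Finset.mem_filter, mem_CL, Finset.not_nonempty_iff_eq_empty]
    constructor
    · rintro ⟨⟨h1, h2, h3⟩, h4⟩
      refine ⟨Finset.subset_sdiff.2 ⟨h1, ?_⟩, h2, h3⟩
      exact Finset.disjoint_iff_inter_eq_empty.2 h4
    · rintro ⟨h1, h2, h3⟩
      have := Finset.subset_sdiff.1 h1
      exact ⟨⟨this.1, h2, h3⟩, Finset.disjoint_iff_inter_eq_empty.1 this.2⟩
  have hcardrest : (A \ Wv).card = n - (k+1) := by
    rw [Finset.card_sdiff_of_subset hWA, hAc, hWcard]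
  have hih := ih (n - (k+1)) (by omega) (A \ Wv) hcardrest
  have hstep := ffstep d (k+1) n (by omega) (by omega) hkn
  rw [hsplit, hrest]
  have hBmeet : ((CL G A).filter (fun s => (s ∩ Wv).Nonempty)).card ≤ 2^(k+1) - 1 := by
    have h1 : 1 ≤ 2^(k+1) := Nat.one_le_two_pow
    omega
  omega

end GalvinAux

/-- **Galvin's conjecture, generalized.** Any graph on `n ≥ 1` vertices with maximum degree at
most `d ≥ 1` has at most `q * (2^(d+1) - 1) + (2^r - 1)` nonempty cliques, where
`n = q*(d+1) + r` with `0 ≤ r ≤ d`. -/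
theorem max_total_cliques_of_max_degree
    (n d q r : ℕ) (hn : 1 ≤ n) (hd : 1 ≤ d)
    (hqr : n = q * (d + 1) + r) (hr : r ≤ d)
    (V : Type*) [Fintype V] [DecidableEq V] (hcard : Fintype.card V = n)
    (G : SimpleGraph V) [DecidableRel G.Adj]
    (hdeg : ∀ v : V, G.degree v ≤ d) :
    ((Finset.univ : Finset (Finset V)).filter
        (fun s : Finset V => s.Nonempty ∧ G.IsClique (↑s : Set V))).card
      ≤ q * (2 ^ (d + 1) - 1) + (2 ^ r - 1) := by
  classical
  have h0 : (Finset.univ : Finset (Finset V)).filter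
        (fun s : Finset V => s.Nonempty ∧ G.IsClique (↑s : Set V))
      = GalvinAux.CL G Finset.univ := by
    rw [GalvinAux.CL, Finset.powerset_univ]
  have hmain := GalvinAux.mainind G d hdeg n Finset.univ (by
    rw [← hcard]; rfl)
  have hmod : n % (d+1) = r := by
    have h1 : q * (d+1) + r = r + (d+1) * q := by ring
    rw [hqr, h1, Nat.add_mul_mod_self_left, Nat.mod_eq_of_lt (by omega)]
  have hdiv : n / (d+1) = q := by
    have h1 : q * (d+1) + r = r + (d+1) * q := by ring
    rw [hqr, h1, Nat.add_mul_div_left _ _ (by omega), Nat.div_eq_of_lt (by omega)]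
    omega
  rw [h0]
  calc (GalvinAux.CL G Finset.univ).card ≤ GalvinAux.ff d n := hmain
    _ = q * (2 ^ (d + 1) - 1) + (2 ^ r - 1) := by
        rw [GalvinAux.ff, hmod, hdiv]
end
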